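/- Let F be a finite field and let C, D be n×n matrices over F with C nonsingular and with |F| sufficiently large (e.g., |F| > n). Then there exists a vector ζ ∈ F^n such that the matrix diag(ζ)·C + D is nonsingular. -/

import Mathlib

open Matrix Polynomial

lemma eval_charpoly' {F : Type*} [Field F] {n : ℕ} (M : Matrix (Fin n) (Fin n) F) (t : F) :
    M.charpoly.eval t = (t • (1 : Matrix (Fin n) (Fin n) F) - M).det := by
  rw [Matrix.charpoly, _root_.eval_det, Matrix.matPolyEquiv_charmatrix]
  simp only [Matrix.scalar, Algebra.algebraMap_eq_smul_one]
  simp [Polynomial.eval_sub, Matrix.smul_eq_diagonal_mul]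
  rfl

theorem stmt_0 {F : Type*} [Field F] [Fintype F] {n : ℕ}
    (hF : n < Fintype.card F)
    (C D : Matrix (Fin n) (Fin n) F) (hC : IsUnit C.det) :
    ∃ ζ : Fin n → F, IsUnit (Matrix.diagonal ζ * C + D).det := by
  set E := C⁻¹ * D with hE
  have hp : (-E).charpoly ≠ 0 := (Matrix.charpoly_monic _).ne_zero
  have hdeg : ((-E).charpoly.natDegree : Cardinal) < Cardinal.mk F := by
    rw [Matrix.charpoly_natDegree_eq_dim, Cardinal.mk_fintype, Fintype.card_fin]
    exact_mod_cast hF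
  obtain ⟨t, ht⟩ := (-E).charpoly.exists_eval_ne_zero_of_natDegree_lt_card hp hdeg
  rw [eval_charpoly', sub_neg_eq_add] at ht
  refine ⟨fun _ => t, ?_⟩
  have hdCE : C * (t • (1 : Matrix (Fin n) (Fin n) F) + E) = Matrix.diagonal (fun _ => t) * C + D := by
    rw [mul_add, mul_smul_comm, mul_one, hE, ← Matrix.mul_assoc, Matrix.mul_nonsing_inv _ hC,
      Matrix.one_mul]
    congr 1
    rw [← Matrix.smul_one_eq_diagonal, Matrix.smul_mul, Matrix.one_mul]
  rw [← hdCE, Matrix.det_mul]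
  exact hC.mul (isUnit_iff_ne_zero.mpr ht)
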